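/- Let g, ĝ, (h_i)_{i∈ψ} and (ĥ_i)_{i∈φ} all be mutually independent random variables, each exponentially distributed with rate 1, where ψ is a nonempty finite index set and φ ⊆ ψ is nonempty. Fix r>0, α≥2, distances d_i>0, and N≥0, and set η = g r^{-α}/(N + Σ_{i∈ψ} h_i d_i^{-α}) and η̂ = ĝ r^{-α}/(N + Σ_{i∈φ} ĥ_i d_i^{-α}). Define CP1(x) = e^{-x r^α N} ∏_{i∈ψ}(1+x r^α d_i^{-α})^{-1} and CP3(x) = e^{-x r^α N} ∏_{i∈φ}(1+x r^α d_i^{-α})^{-1}. Then for all T ≥ 0 and S_th ≥ 0, the FFR coverage probability satisfies P( (η > S_th and η > T) or (η ≤ S_th and η̂ > T) ) = CP1(max(T, S_th)) + CP3(T) − CP3(T)·CP1(S_th). -/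

import Mathlib

open MeasureTheory ProbabilityTheory
open scoped ENNReal

section FFRAux

variable {Ω : Type*} [MeasurableSpace Ω] {μ : Measure Ω}

lemma FFR_expMeasure_Iic (x : ℝ) :
    expMeasure 1 (Set.Iic x) = ENNReal.ofReal (if 0 ≤ x then 1 - Real.exp (-x) else 0) := by
  have : expMeasure 1 (Set.Iic x) = ∫⁻ y in Set.Iic x, exponentialPDF 1 y := by
    rw [expMeasure, gammaMeasure, withDensity_apply _ measurableSet_Iic]
    rfl
  rw [this, lintegral_exponentialPDF_eq_antiDeriv one_pos x]
  simp [one_mul]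

lemma FFR_expMeasure_Ioi {v : ℝ} (hv : 0 ≤ v) :
    expMeasure 1 (Set.Ioi v) = ENNReal.ofReal (Real.exp (-v)) := by
  haveI := isProbabilityMeasure_expMeasure one_pos
  have h1 : Real.exp (-v) ≤ 1 := Real.exp_le_one_iff.2 (by linarith)
  have hIic : expMeasure 1 (Set.Iic v) = ENNReal.ofReal (1 - Real.exp (-v)) := by
    rw [FFR_expMeasure_Iic, if_pos hv]
  have hc : Set.Ioi v = (Set.Iic v)ᶜ := (Set.compl_Iic (a := v)).symm
  rw [hc, measure_compl measurableSet_Iic (measure_ne_top _ _), measure_univ, hIic,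
    ← ENNReal.ofReal_one, ← ENNReal.ofReal_sub _ (by linarith)]
  norm_num

lemma FFR_exp_rv_pos {Y : Ω → ℝ} (hYm : Measurable Y) (hY : μ.map Y = expMeasure 1) :
    ∀ᵐ ω ∂μ, 0 < Y ω := by
  have hset : {ω | ¬ 0 < Y ω} = Y ⁻¹' Set.Iic 0 := by ext ω; simp [not_lt]
  have : μ (Y ⁻¹' Set.Iic 0) = 0 := by
    rw [← Measure.map_apply hYm measurableSet_Iic, hY, FFR_expMeasure_Iic]
    simp
  rw [ae_iff]
  rw [hset]; exact this

lemma FFR_laplace_exp {b : ℝ} (hb : 0 ≤ b) :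
    ∫⁻ y, ENNReal.ofReal (Real.exp (-(b * y))) ∂(expMeasure 1)
      = ENNReal.ofReal ((1 + b)⁻¹) := by
  have h1b : (0:ℝ) < 1 + b := by linarith
  have hmpdf : Measurable (exponentialPDF 1) :=
    (measurable_exponentialPDFReal 1).ennreal_ofReal
  have hmg : Measurable fun y : ℝ => ENNReal.ofReal (Real.exp (-(b * y))) :=
    ((measurable_const.mul measurable_id).neg.exp).ennreal_ofReal
  have hwd : expMeasure 1 = volume.withDensity (exponentialPDF 1) := rfl
  rw [hwd, lintegral_withDensity_eq_lintegral_mul _ hmpdf hmg]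
  have hpt : ∀ y : ℝ, exponentialPDF 1 y * ENNReal.ofReal (Real.exp (-(b * y)))
      = ENNReal.ofReal ((1 + b)⁻¹) * exponentialPDF (1 + b) y := by
    intro y
    by_cases hy : 0 ≤ y
    · rw [exponentialPDF_of_nonneg hy, exponentialPDF_of_nonneg hy,
        ← ENNReal.ofReal_mul (by positivity), ← ENNReal.ofReal_mul (by positivity)]
      congr 1
      rw [one_mul, ← mul_assoc, inv_mul_cancel₀ h1b.ne', one_mul, ← Real.exp_add]
      congr 1; ring
    · have hy' : y < 0 := lt_of_not_ge hy
      rw [exponentialPDF_of_neg hy', exponentialPDF_of_neg hy', zero_mul, mul_zero]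
  calc ∫⁻ y, (exponentialPDF 1 * fun y => ENNReal.ofReal (Real.exp (-(b * y)))) y
      = ∫⁻ y, ENNReal.ofReal ((1 + b)⁻¹) * exponentialPDF (1 + b) y := by
        apply lintegral_congr; intro y; exact hpt y
    _ = ENNReal.ofReal ((1 + b)⁻¹) * ∫⁻ y, exponentialPDF (1 + b) y :=
        lintegral_const_mul _ ((measurable_exponentialPDFReal (1+b)).ennreal_ofReal)
    _ = ENNReal.ofReal ((1 + b)⁻¹) := by
        rw [lintegral_exponentialPDF_eq_one h1b, mul_one]

lemma FFR_iIndepFun_comp_of_injective {κ κ' : Type*} {f : κ → Ω → ℝ}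
    (hf : iIndepFun f μ)
    (u : κ' → κ) (hu : Function.Injective u) :
    iIndepFun (fun i => f (u i)) μ := by
  classical
  rw [iIndepFun_iff_measure_inter_preimage_eq_mul] at hf ⊢
  intro S sets hsets
  set sets' : κ → Set ℝ := fun k => ⋂ i ∈ S.filter (fun i => u i = k), sets i with hsets'def
  have hkey : ∀ i ∈ S, sets' (u i) = sets i := by
    intro i hi
    have hfil : S.filter (fun j => u j = u i) = {i} := by
      ext j
      simp only [Finset.mem_filter, Finset.mem_singleton]
      constructor
      · rintro ⟨-, hji⟩; exact hu hji
      · rintro rfl; exact ⟨hi, rfl⟩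
    calc sets' (u i) = ⋂ j ∈ S.filter (fun j => u j = u i), sets j := rfl
      _ = ⋂ j ∈ ({i} : Finset κ'), sets j := by rw [hfil]
      _ = sets i := by simp
  have hmeas' : ∀ k, k ∈ S.image u → MeasurableSet (sets' k) := by
    intro k _
    exact MeasurableSet.biInter (Finset.countable_toSet _)
      (fun i hi => hsets i (Finset.mem_filter.1 hi).1)
  have hmain := hf (S.image u) hmeas'
  have hL : (⋂ k ∈ S.image u, f k ⁻¹' sets' k) = ⋂ i ∈ S, f (u i) ⁻¹' sets i := by
    rw [Finset.set_biInter_finset_image]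
    exact Set.iInter₂_congr fun i hi => by rw [hkey i hi]
  have hR : (∏ k ∈ S.image u, μ (f k ⁻¹' sets' k)) = ∏ i ∈ S, μ (f (u i) ⁻¹' sets i) := by
    rw [Finset.prod_image (fun i _ j _ hij => hu hij)]
    exact Finset.prod_congr rfl fun i hi => by rw [hkey i hi]
  rw [hL, hR] at hmain
  exact hmain

lemma FFR_lintegral_prod {ι' : Type*} [IsProbabilityMeasure μ]
    (Z : ι' → Ω → ℝ≥0∞) (hZm : ∀ i, Measurable (Z i))
    (hZ : iIndepFun Z μ)
    (s : Finset ι') :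
    ∫⁻ ω, ∏ i ∈ s, Z i ω ∂μ = ∏ i ∈ s, ∫⁻ ω, Z i ω ∂μ := by
  classical
  induction s using Finset.induction_on with
  | empty => simp
  | @insert a s ha ih =>
    have hprodm : Measurable fun ω => ∏ i ∈ s, Z i ω :=
      Finset.measurable_prod _ (fun i _ => hZm i)
    have hind : IndepFun (Z a) (fun ω => ∏ i ∈ s, Z i ω) μ := by
      have h1 := hZ.indepFun_finsetProd_of_notMem hZm ha
      have hfe : (∏ j ∈ s, Z j) = fun ω => ∏ i ∈ s, Z i ω := by
        funext ω; simp [Finset.prod_apply]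
      rw [hfe] at h1
      exact h1.symm
    have h2 := lintegral_mul_eq_lintegral_mul_lintegral_of_indepFun (hZm a) hprodm hind
    simp only [Pi.mul_apply] at h2
    simp only [Finset.prod_insert ha]
    rw [h2, ih]

lemma FFR_tail [IsProbabilityMeasure μ]
    (G V : Ω → ℝ) (hGm : Measurable G) (hVm : Measurable V)
    (hG : μ.map G = expMeasure 1) (hV0 : ∀ᵐ ω ∂μ, 0 ≤ V ω)
    (hindep : IndepFun V G μ) :
    μ {ω | V ω < G ω} = ∫⁻ ω, ENNReal.ofReal (Real.exp (-(V ω))) ∂μ := by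
  haveI := isProbabilityMeasure_expMeasure one_pos
  have hmap : μ.map (fun ω => (V ω, G ω)) = (μ.map V).prod (μ.map G) :=
    (indepFun_iff_map_prod_eq_prod_map_map hVm.aemeasurable hGm.aemeasurable).1 hindep
  have hS : MeasurableSet {p : ℝ × ℝ | p.1 < p.2} :=
    measurableSet_lt measurable_fst measurable_snd
  have hev : {ω | V ω < G ω} = (fun ω => (V ω, G ω)) ⁻¹' {p : ℝ × ℝ | p.1 < p.2} := rfl
  rw [hev, ← Measure.map_apply (hVm.prodMk hGm) hS, hmap, hG, Measure.prod_apply hS]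
  have h1 : ∀ v : ℝ, (Prod.mk v ⁻¹' {p : ℝ × ℝ | p.1 < p.2}) = Set.Ioi v := fun v => rfl
  simp only [h1]
  have hae : ∀ᵐ v ∂(μ.map V), 0 ≤ v := by
    rw [ae_map_iff hVm.aemeasurable (measurableSet_Ici : MeasurableSet (Set.Ici (0:ℝ)))]
    exact hV0
  have hcongr : ∫⁻ v, expMeasure 1 (Set.Ioi v) ∂(μ.map V)
      = ∫⁻ v, ENNReal.ofReal (Real.exp (-v)) ∂(μ.map V) := by
    apply lintegral_congr_ae
    filter_upwards [hae] with v hv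
    exact FFR_expMeasure_Ioi hv
  rw [hcongr, lintegral_map (measurable_neg.exp.ennreal_ofReal) hVm]

lemma FFR_laplace_sum {ι' : Type*} [IsProbabilityMeasure μ]
    (Y : ι' → Ω → ℝ) (hYm : ∀ i, Measurable (Y i))
    (hYindep : iIndepFun Y μ)
    (s : Finset ι') (hY : ∀ i ∈ s, μ.map (Y i) = expMeasure 1)
    (b : ι' → ℝ) (hb : ∀ i ∈ s, 0 ≤ b i) (a : ℝ) :
    ∫⁻ ω, ENNReal.ofReal (Real.exp (-(a + ∑ i ∈ s, b i * Y i ω))) ∂μ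
      = ENNReal.ofReal (Real.exp (-a)) * ∏ i ∈ s, ENNReal.ofReal ((1 + b i)⁻¹) := by
  classical
  have hpt : ∀ ω, ENNReal.ofReal (Real.exp (-(a + ∑ i ∈ s, b i * Y i ω)))
      = ENNReal.ofReal (Real.exp (-a))
          * ∏ i ∈ s, ENNReal.ofReal (Real.exp (-(b i * Y i ω))) := by
    intro ω
    rw [neg_add, Real.exp_add, ENNReal.ofReal_mul (Real.exp_nonneg _)]
    congr 1
    rw [← Finset.sum_neg_distrib, Real.exp_sum, ENNReal.ofReal_prod_of_nonneg
      (fun i _ => Real.exp_nonneg _)]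
  simp only [hpt]
  have hZm : ∀ i, Measurable fun ω => ENNReal.ofReal (Real.exp (-(b i * Y i ω))) :=
    fun i => (((hYm i).const_mul (b i)).neg.exp).ennreal_ofReal
  rw [lintegral_const_mul _ (Finset.measurable_prod _ (fun i _ => hZm i))]
  congr 1
  have hZind : iIndepFun
      (fun i ω => ENNReal.ofReal (Real.exp (-(b i * Y i ω)))) μ :=
    hYindep.comp (fun i y => ENNReal.ofReal (Real.exp (-(b i * y))))
      (fun i => ((measurable_const.mul measurable_id).neg.exp).ennreal_ofReal)
  rw [FFR_lintegral_prod _ hZm hZind s]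
  refine Finset.prod_congr rfl fun i hi => ?_
  rw [← lintegral_map (f := fun y : ℝ => ENNReal.ofReal (Real.exp (-(b i * y))))
      (((measurable_const.mul measurable_id).neg.exp).ennreal_ofReal) (hYm i), hY i hi]
  exact FFR_laplace_exp (hb i hi)

lemma FFR_prob_gt_eq {ι' : Type*} [IsProbabilityMeasure μ] [Fintype ι'] [Nonempty ι']
    (G : Ω → ℝ) (Y : ι' → Ω → ℝ) (hGm : Measurable G) (hYm : ∀ i, Measurable (Y i))
    (hG : μ.map G = expMeasure 1) (hY : ∀ i, μ.map (Y i) = expMeasure 1)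
    (hYindep : iIndepFun Y μ)
    (hTup : IndepFun (fun ω (i : ι') => Y i ω) G μ)
    (c : ℝ) (hc : 0 < c) (N : ℝ) (hN : 0 ≤ N) (w : ι' → ℝ) (hw : ∀ i, 0 < w i)
    (x : ℝ) (hx : 0 ≤ x) :
    μ {ω | x < G ω * c⁻¹ / (N + ∑ i, Y i ω * w i)}
      = ENNReal.ofReal (Real.exp (-(x * c * N)))
          * ∏ i, ENNReal.ofReal ((1 + x * c * w i)⁻¹) := by
  have hYpos : ∀ᵐ ω ∂μ, ∀ i, 0 < Y i ω := (ae_all_iff).2 fun i => FFR_exp_rv_pos (hYm i) (hY i)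
  have hDpos : ∀ᵐ ω ∂μ, 0 < N + ∑ i, Y i ω * w i := by
    filter_upwards [hYpos] with ω hω
    have hs : 0 < ∑ i, Y i ω * w i :=
      Finset.sum_pos (fun i _ => mul_pos (hω i) (hw i)) Finset.univ_nonempty
    linarith
  set V : Ω → ℝ := fun ω => x * c * N + ∑ i, x * c * w i * Y i ω with hVdef
  have hVm : Measurable V :=
    measurable_const.add (Finset.measurable_sum _ fun i _ => ((hYm i).const_mul _))
  have hsets : {ω | x < G ω * c⁻¹ / (N + ∑ i, Y i ω * w i)} =ᵐ[μ] {ω | V ω < G ω} := by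
    apply Filter.eventuallyEq_set.2
    filter_upwards [hDpos] with ω hD
    have hcD : 0 < c * (N + ∑ i, Y i ω * w i) := mul_pos hc hD
    have h1 : G ω * c⁻¹ / (N + ∑ i, Y i ω * w i)
        = G ω / (c * (N + ∑ i, Y i ω * w i)) := by
      rw [← div_eq_mul_inv, div_div]
    have h2 : x * (c * (N + ∑ i, Y i ω * w i)) = V ω := by
      simp only [hVdef, mul_add, Finset.mul_sum, ← mul_assoc]
      congr 1
      exact Finset.sum_congr rfl fun i _ => by ring
    rw [h1, lt_div_iff₀ hcD, h2]
  rw [measure_congr hsets]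
  have hV0 : ∀ᵐ ω ∂μ, 0 ≤ V ω := by
    filter_upwards [hYpos] with ω hω
    have hs : 0 ≤ ∑ i, x * c * w i * Y i ω :=
      Finset.sum_nonneg fun i _ =>
        mul_nonneg (mul_nonneg (mul_nonneg hx hc.le) (hw i).le) (hω i).le
    have hxn : 0 ≤ x * c * N := mul_nonneg (mul_nonneg hx hc.le) hN
    simp only [hVdef]
    linarith
  have hindepVG : IndepFun V G μ := by
    have hΦ : Measurable fun v : ι' → ℝ => x * c * N + ∑ i, x * c * w i * v i :=
      measurable_const.add
        (Finset.measurable_sum _ fun i _ => ((measurable_pi_apply i).const_mul _))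
    exact hTup.comp hΦ measurable_id
  rw [FFR_tail G V hGm hVm hG hV0 hindepVG]
  simp only [hVdef]
  exact FFR_laplace_sum Y hYm hYindep Finset.univ (fun i _ => hY i)
    (fun i => x * c * w i) (fun i _ => mul_nonneg (mul_nonneg hx hc.le) (hw i).le) (x * c * N)

end FFRAux

/-- FR1 coverage probability at threshold `x`. -/
noncomputable def CP1 {ι : Type*} [Fintype ι] (d : ι → ℝ) (r α N x : ℝ) : ℝ :=
  Real.exp (-(x * r ^ α * N)) * ∏ i, (1 + x * r ^ α * d i ^ (-α))⁻¹

/-- FR3 coverage probability (interferer set `φ`) at threshold `x`. -/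
noncomputable def CP3 {ι : Type*} (φ : Finset ι) (d : ι → ℝ) (r α N x : ℝ) : ℝ :=
  Real.exp (-(x * r ^ α * N)) * ∏ i ∈ φ, (1 + x * r ^ α * d i ^ (-α))⁻¹

/-- the FFR coverage probability, in the uncorrelated sub-band case, equals
`CP1(max(T,S_th)) + CP3(T) − CP3(T)·CP1(S_th)`. -/
theorem FFR_coverage_probability_uncorrelated
    {Ω : Type*} [MeasurableSpace Ω] (μ : Measure Ω) [IsProbabilityMeasure μ]
    {ι : Type*} [Fintype ι] [Nonempty ι]
    (φ : Finset ι) (hφ : φ.Nonempty)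
    (g ghat : Ω → ℝ) (h hhat : ι → Ω → ℝ)
    (hg_meas : Measurable g) (hghat_meas : Measurable ghat)
    (hh_meas : ∀ i, Measurable (h i)) (hhhat_meas : ∀ i, Measurable (hhat i))
    (hg_exp : Measure.map g μ = expMeasure 1)
    (hghat_exp : Measure.map ghat μ = expMeasure 1)
    (hh_exp : ∀ i, Measure.map (h i) μ = expMeasure 1)
    (hhhat_exp : ∀ i ∈ φ, Measure.map (hhat i) μ = expMeasure 1)
    (h_indep : iIndepFun
      (fun x : Bool ⊕ ι ⊕ {i // i ∈ φ} =>
        Sum.elim (fun b => if b then ghat else g)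
          (Sum.elim h (fun i => hhat i.1)) x) μ)
    (r α N : ℝ) (hr : 0 < r) (hα : 2 ≤ α) (hN : 0 ≤ N)
    (d : ι → ℝ) (hd : ∀ i, 0 < d i)
    (T Sth : ℝ) (hT : 0 ≤ T) (hSth : 0 ≤ Sth) :
    (μ {ω | (Sth < g ω * r ^ (-α) / (N + ∑ i, h i ω * d i ^ (-α)) ∧
               T < g ω * r ^ (-α) / (N + ∑ i, h i ω * d i ^ (-α))) ∨
             (g ω * r ^ (-α) / (N + ∑ i, h i ω * d i ^ (-α)) ≤ Sth ∧
               T < ghat ω * r ^ (-α) / (N + ∑ i ∈ φ, hhat i ω * d i ^ (-α)))}).toReal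
      = CP1 d r α N (max T Sth) + CP3 φ d r α N T
          - CP3 φ d r α N T * CP1 d r α N Sth := by
  classical
  haveI : Nonempty {i // i ∈ φ} := ⟨⟨hφ.choose, hφ.choose_spec⟩⟩
  have hcα : (0:ℝ) < r ^ α := Real.rpow_pos_of_pos hr α
  have hrα : r ^ (-α) = (r ^ α)⁻¹ := Real.rpow_neg hr.le α
  have hwd : ∀ i : ι, (0:ℝ) < d i ^ (-α) := fun i => Real.rpow_pos_of_pos (hd i) _
  -- measurability of the whole family
  have hXm : ∀ k : Bool ⊕ ι ⊕ {i // i ∈ φ},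
      Measurable ((fun x : Bool ⊕ ι ⊕ {i // i ∈ φ} =>
        Sum.elim (fun b => if b then ghat else g)
          (Sum.elim h (fun i => hhat i.1)) x) k) := by
    rintro (b | i | j)
    · cases b
      · simpa using hg_meas
      · simpa using hghat_meas
    · simpa using hh_meas i
    · simpa using hhhat_meas j.1
  -- independence of the h-family and the hhat-family
  have hh_indep : iIndepFun h μ := by
    have := FFR_iIndepFun_comp_of_injective h_indep
      (fun i : ι => (Sum.inr (Sum.inl i) : Bool ⊕ ι ⊕ {i // i ∈ φ}))
      (fun a b hab => by simpa using hab)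
    exact this
  have hhhat_indep : iIndepFun
      (fun j : {i // i ∈ φ} => hhat j.1) μ := by
    have := FFR_iIndepFun_comp_of_injective h_indep
      (fun j : {i // i ∈ φ} => (Sum.inr (Sum.inr j) : Bool ⊕ ι ⊕ {i // i ∈ φ}))
      (fun a b hab => by simpa using hab)
    exact this
  -- tuple independence: (h i)_i vs g
  have hTup1 : IndepFun (fun ω (i : ι) => h i ω) g μ := by
    have hdisj : Disjoint
        ((Finset.univ : Finset ι).image
          (fun i => (Sum.inr (Sum.inl i) : Bool ⊕ ι ⊕ {i // i ∈ φ})))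
        ({(Sum.inl false : Bool ⊕ ι ⊕ {i // i ∈ φ})} : Finset _) := by
      rw [Finset.disjoint_left]
      rintro k hk hk'
      simp only [Finset.mem_image, Finset.mem_univ, true_and] at hk
      simp only [Finset.mem_singleton] at hk'
      obtain ⟨i, rfl⟩ := hk
      simp at hk'
    have base := h_indep.indepFun_finset _ _ hdisj hXm
    have hΦm : Measurable fun v : {k // k ∈ (Finset.univ : Finset ι).image
          (fun i => (Sum.inr (Sum.inl i) : Bool ⊕ ι ⊕ {i // i ∈ φ}))} → ℝ =>
        fun i : ι => v ⟨Sum.inr (Sum.inl i),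
          Finset.mem_image_of_mem _ (Finset.mem_univ i)⟩ :=
      measurable_pi_lambda _ fun i => measurable_pi_apply _
    have hΨm : Measurable fun v : {k // k ∈ ({(Sum.inl false : Bool ⊕ ι ⊕ {i // i ∈ φ})} :
          Finset _)} → ℝ => v ⟨Sum.inl false, Finset.mem_singleton_self _⟩ :=
      measurable_pi_apply _
    exact base.comp hΦm hΨm
  -- tuple independence: (hhat j)_{j ∈ φ} vs ghat
  have hTup3 : IndepFun (fun ω (j : {i // i ∈ φ}) => hhat j.1 ω) ghat μ := by
    have hdisj : Disjoint
        ((Finset.univ : Finset {i // i ∈ φ}).image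
          (fun j => (Sum.inr (Sum.inr j) : Bool ⊕ ι ⊕ {i // i ∈ φ})))
        ({(Sum.inl true : Bool ⊕ ι ⊕ {i // i ∈ φ})} : Finset _) := by
      rw [Finset.disjoint_left]
      rintro k hk hk'
      simp only [Finset.mem_image, Finset.mem_univ, true_and] at hk
      simp only [Finset.mem_singleton] at hk'
      obtain ⟨j, rfl⟩ := hk
      simp at hk'
    have base := h_indep.indepFun_finset _ _ hdisj hXm
    have hΦm : Measurable fun v : {k // k ∈ (Finset.univ : Finset {i // i ∈ φ}).image
          (fun j => (Sum.inr (Sum.inr j) : Bool ⊕ ι ⊕ {i // i ∈ φ}))} → ℝ =>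
        fun j : {i // i ∈ φ} => v ⟨Sum.inr (Sum.inr j),
          Finset.mem_image_of_mem _ (Finset.mem_univ j)⟩ :=
      measurable_pi_lambda _ fun j => measurable_pi_apply _
    have hΨm : Measurable fun v : {k // k ∈ ({(Sum.inl true : Bool ⊕ ι ⊕ {i // i ∈ φ})} :
          Finset _)} → ℝ => v ⟨Sum.inl true, Finset.mem_singleton_self _⟩ :=
      measurable_pi_apply _
    exact base.comp hΦm hΨm
  -- coverage probability for FR1
  have hP1 : ∀ x : ℝ, 0 ≤ x →
      μ {ω | x < g ω * r ^ (-α) / (N + ∑ i, h i ω * d i ^ (-α))}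
        = ENNReal.ofReal (CP1 d r α N x) := by
    intro x hx
    have hseteq : {ω | x < g ω * r ^ (-α) / (N + ∑ i, h i ω * d i ^ (-α))}
        = {ω | x < g ω * (r ^ α)⁻¹ / (N + ∑ i, h i ω * d i ^ (-α))} := by
      rw [hrα]
    rw [hseteq, FFR_prob_gt_eq g h hg_meas hh_meas hg_exp hh_exp hh_indep hTup1
      (r ^ α) hcα N hN (fun i => d i ^ (-α)) hwd x hx]
    simp only [CP1]
    rw [ENNReal.ofReal_mul (Real.exp_nonneg _), ENNReal.ofReal_prod_of_nonneg
      (fun i _ => inv_nonneg.2 (add_nonneg zero_le_one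
        (mul_nonneg (mul_nonneg hx hcα.le) (hwd i).le)))]
  -- coverage probability for FR3
  have hP3 : μ {ω | T < ghat ω * r ^ (-α) / (N + ∑ i ∈ φ, hhat i ω * d i ^ (-α))}
      = ENNReal.ofReal (CP3 φ d r α N T) := by
    have hseteq : {ω | T < ghat ω * r ^ (-α) / (N + ∑ i ∈ φ, hhat i ω * d i ^ (-α))}
        = {ω | T < ghat ω * (r ^ α)⁻¹
            / (N + ∑ j : {i // i ∈ φ}, hhat j.1 ω * d j.1 ^ (-α))} := by
      ext ω
      simp only [Set.mem_setOf_eq, hrα, Finset.univ_eq_attach,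
        Finset.sum_attach φ (fun i => hhat i ω * d i ^ (-α))]
    rw [hseteq, FFR_prob_gt_eq ghat (fun j : {i // i ∈ φ} => hhat j.1) hghat_meas
      (fun j => hhhat_meas j.1) hghat_exp (fun j => hhhat_exp j.1 j.2) hhhat_indep hTup3
      (r ^ α) hcα N hN (fun j => d j.1 ^ (-α)) (fun j => hwd j.1) T hT]
    simp only [CP3]
    rw [ENNReal.ofReal_mul (Real.exp_nonneg _), ENNReal.ofReal_prod_of_nonneg
      (fun i _ => inv_nonneg.2 (add_nonneg zero_le_one
        (mul_nonneg (mul_nonneg hT hcα.le) (hwd i).le)))]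
    congr 1
    rw [Finset.univ_eq_attach]
    exact Finset.prod_attach φ (fun i => ENNReal.ofReal ((1 + T * r ^ α * d i ^ (-α))⁻¹))
  -- measurability of the two SINRs
  have hEm : Measurable fun ω => g ω * r ^ (-α) / (N + ∑ i, h i ω * d i ^ (-α)) :=
    (hg_meas.mul measurable_const).div
      (measurable_const.add (Finset.measurable_sum _ fun i _ => (hh_meas i).mul_const _))
  have hFm : Measurable fun ω => ghat ω * r ^ (-α) / (N + ∑ i ∈ φ, hhat i ω * d i ^ (-α)) :=
    (hghat_meas.mul measurable_const).div
      (measurable_const.add (Finset.measurable_sum _ fun i _ => (hhhat_meas i).mul_const _))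
  -- independence of the two SINRs
  have hee : IndepFun (fun ω => g ω * r ^ (-α) / (N + ∑ i, h i ω * d i ^ (-α)))
      (fun ω => ghat ω * r ^ (-α) / (N + ∑ i ∈ φ, hhat i ω * d i ^ (-α))) μ := by
    have hdisj : Disjoint
        (insert (Sum.inl false : Bool ⊕ ι ⊕ {i // i ∈ φ})
          ((Finset.univ : Finset ι).image
            (fun i => (Sum.inr (Sum.inl i) : Bool ⊕ ι ⊕ {i // i ∈ φ}))))
        (insert (Sum.inl true : Bool ⊕ ι ⊕ {i // i ∈ φ})
          ((Finset.univ : Finset {i // i ∈ φ}).image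
            (fun j => (Sum.inr (Sum.inr j) : Bool ⊕ ι ⊕ {i // i ∈ φ})))) := by
      rw [Finset.disjoint_left]
      rintro k hk hk'
      simp only [Finset.mem_insert, Finset.mem_image, Finset.mem_univ, true_and]
        at hk hk'
      rcases hk with rfl | ⟨i, rfl⟩ <;> rcases hk' with h' | ⟨j, h'⟩ <;> simp_all
    have base := h_indep.indepFun_finset _ _ hdisj hXm
    have hΦ1m : Measurable fun v : {k // k ∈ insert (Sum.inl false : Bool ⊕ ι ⊕ {i // i ∈ φ})
          ((Finset.univ : Finset ι).image
            (fun i => (Sum.inr (Sum.inl i) : Bool ⊕ ι ⊕ {i // i ∈ φ})))} → ℝ =>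
        v ⟨Sum.inl false, Finset.mem_insert_self _ _⟩ * r ^ (-α)
          / (N + ∑ i : ι, v ⟨Sum.inr (Sum.inl i),
              Finset.mem_insert_of_mem (Finset.mem_image_of_mem _ (Finset.mem_univ i))⟩
              * d i ^ (-α)) :=
      ((measurable_pi_apply _).mul measurable_const).div
        (measurable_const.add (Finset.measurable_sum _ fun i _ =>
          (measurable_pi_apply _).mul_const _))
    have hΦ2m : Measurable fun v : {k // k ∈ insert (Sum.inl true : Bool ⊕ ι ⊕ {i // i ∈ φ})
          ((Finset.univ : Finset {i // i ∈ φ}).image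
            (fun j => (Sum.inr (Sum.inr j) : Bool ⊕ ι ⊕ {i // i ∈ φ})))} → ℝ =>
        v ⟨Sum.inl true, Finset.mem_insert_self _ _⟩ * r ^ (-α)
          / (N + ∑ j : {i // i ∈ φ}, v ⟨Sum.inr (Sum.inr j),
              Finset.mem_insert_of_mem (Finset.mem_image_of_mem _ (Finset.mem_univ j))⟩
              * d j.1 ^ (-α)) :=
      ((measurable_pi_apply _).mul measurable_const).div
        (measurable_const.add (Finset.measurable_sum _ fun j _ =>
          (measurable_pi_apply _).mul_const _))
    have hcomp := base.comp hΦ1m hΦ2m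
    have hsumF : (fun ω => ghat ω * r ^ (-α)
          / (N + ∑ j : {i // i ∈ φ}, hhat j.1 ω * d j.1 ^ (-α)))
        = fun ω => ghat ω * r ^ (-α) / (N + ∑ i ∈ φ, hhat i ω * d i ^ (-α)) := by
      funext ω
      rw [Finset.univ_eq_attach, Finset.sum_attach φ (fun i => hhat i ω * d i ^ (-α))]
    rw [← hsumF]
    exact hcomp
  -- split the coverage event
  have hsplit : {ω | (Sth < g ω * r ^ (-α) / (N + ∑ i, h i ω * d i ^ (-α)) ∧
               T < g ω * r ^ (-α) / (N + ∑ i, h i ω * d i ^ (-α))) ∨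
             (g ω * r ^ (-α) / (N + ∑ i, h i ω * d i ^ (-α)) ≤ Sth ∧
               T < ghat ω * r ^ (-α) / (N + ∑ i ∈ φ, hhat i ω * d i ^ (-α)))}
      = {ω | max T Sth < g ω * r ^ (-α) / (N + ∑ i, h i ω * d i ^ (-α))}
        ∪ ({ω | g ω * r ^ (-α) / (N + ∑ i, h i ω * d i ^ (-α)) ≤ Sth}
            ∩ {ω | T < ghat ω * r ^ (-α) / (N + ∑ i ∈ φ, hhat i ω * d i ^ (-α))}) := by
    ext ω
    simp only [Set.mem_setOf_eq, Set.mem_union, Set.mem_inter_iff, max_lt_iff]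
    tauto
  have hdisjAB : Disjoint
      {ω | max T Sth < g ω * r ^ (-α) / (N + ∑ i, h i ω * d i ^ (-α))}
      ({ω | g ω * r ^ (-α) / (N + ∑ i, h i ω * d i ^ (-α)) ≤ Sth}
          ∩ {ω | T < ghat ω * r ^ (-α) / (N + ∑ i ∈ φ, hhat i ω * d i ^ (-α))}) := by
    rw [Set.disjoint_left]
    rintro ω hA hB
    rw [Set.mem_setOf_eq] at hA
    obtain ⟨hB1, -⟩ := hB
    rw [Set.mem_setOf_eq] at hB1
    exact absurd hB1 (not_le.2 ((max_lt_iff.1 hA).2))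
  have hmeasB : MeasurableSet
      ({ω | g ω * r ^ (-α) / (N + ∑ i, h i ω * d i ^ (-α)) ≤ Sth}
          ∩ {ω | T < ghat ω * r ^ (-α) / (N + ∑ i ∈ φ, hhat i ω * d i ^ (-α))}) :=
    (measurableSet_le hEm measurable_const).inter (measurableSet_lt measurable_const hFm)
  rw [hsplit, measure_union hdisjAB hmeasB]
  -- measure of the complement event
  have hcompl : μ {ω | g ω * r ^ (-α) / (N + ∑ i, h i ω * d i ^ (-α)) ≤ Sth}
      = 1 - ENNReal.ofReal (CP1 d r α N Sth) := by
    have hceq : {ω | g ω * r ^ (-α) / (N + ∑ i, h i ω * d i ^ (-α)) ≤ Sth}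
        = {ω | Sth < g ω * r ^ (-α) / (N + ∑ i, h i ω * d i ^ (-α))}ᶜ := by
      ext ω; simp [not_lt]
    rw [hceq, measure_compl (measurableSet_lt measurable_const hEm) (measure_ne_top _ _),
      measure_univ, hP1 Sth hSth]
  -- the intersection factors
  have hinter : μ ({ω | g ω * r ^ (-α) / (N + ∑ i, h i ω * d i ^ (-α)) ≤ Sth}
          ∩ {ω | T < ghat ω * r ^ (-α) / (N + ∑ i ∈ φ, hhat i ω * d i ^ (-α))})
      = μ {ω | g ω * r ^ (-α) / (N + ∑ i, h i ω * d i ^ (-α)) ≤ Sth}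
        * μ {ω | T < ghat ω * r ^ (-α) / (N + ∑ i ∈ φ, hhat i ω * d i ^ (-α))} :=
    hee.measure_inter_preimage_eq_mul (Set.Iic Sth) (Set.Ioi T)
      measurableSet_Iic measurableSet_Ioi
  rw [hP1 (max T Sth) (le_trans hT (le_max_left T Sth)), hinter, hcompl, hP3]
  -- final arithmetic
  have hA0 : 0 ≤ CP1 d r α N (max T Sth) := by
    apply mul_nonneg (Real.exp_nonneg _)
    exact Finset.prod_nonneg fun i _ => inv_nonneg.2 (add_nonneg zero_le_one
      (mul_nonneg (mul_nonneg (le_trans hT (le_max_left T Sth)) hcα.le) (hwd i).le))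
  have hB0 : 0 ≤ CP1 d r α N Sth := by
    apply mul_nonneg (Real.exp_nonneg _)
    exact Finset.prod_nonneg fun i _ => inv_nonneg.2 (add_nonneg zero_le_one
      (mul_nonneg (mul_nonneg hSth hcα.le) (hwd i).le))
  have hC0 : 0 ≤ CP3 φ d r α N T := by
    apply mul_nonneg (Real.exp_nonneg _)
    exact Finset.prod_nonneg fun i _ => inv_nonneg.2 (add_nonneg zero_le_one
      (mul_nonneg (mul_nonneg hT hcα.le) (hwd i).le))
  have hB1 : CP1 d r α N Sth ≤ 1 := by
    have := hP1 Sth hSth ▸ prob_le_one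
      (μ := μ) (s := {ω | Sth < g ω * r ^ (-α) / (N + ∑ i, h i ω * d i ^ (-α))})
    exact ENNReal.ofReal_le_one.1 this
  rw [← ENNReal.ofReal_one, ← ENNReal.ofReal_sub _ hB0,
    ← ENNReal.ofReal_mul (by linarith : (0:ℝ) ≤ 1 - CP1 d r α N Sth),
    ← ENNReal.ofReal_add hA0 (mul_nonneg (by linarith) hC0),
    ENNReal.toReal_ofReal (by nlinarith)]
  ring
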